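/- Suppose φ is a C³ function on [x_l, x_r] satisfying φ''' + F_0 φ'' + F_0'' φ = r, with F_0 a C² function and r continuous. If φ(x_l) = φ'(x_l) = 0 and φ''(x_l) = 1 and r = 0, then sup_{x ∈ [x_l, x_r]} |φ''(x)| ≤ exp( (1/2) ∫_{x_l}^{x_r} Q_2(y) dy ), where Q_2(x) = (1 + (x−x_l)^4/4) F_0''(x) − 2F_0(x) when F_0''(x) − 2F_0(x) > 0, and Q_2(x) = ((x−x_l)^4/4) F_0''(x) otherwise, assuming F_0'' ≥ 0 and F_0 ≥ 0 on [x_l, x_r]. -/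

import Mathlib

open Set intervalIntegral

/-- Energy bound for the homogeneous problem with data `φ(x_l)=φ'(x_l)=0`, `φ''(x_l)=1`:
`sup |φ''| ≤ exp((1/2)∫ Q₂)`. -/
theorem stmt_4 (xl xr : ℝ) (hx : xl ≤ xr) (φ F₀ : ℝ → ℝ)
    (hφ : ContDiff ℝ 3 φ) (hF₀ : ContDiff ℝ 2 F₀)
    (hF₀pos : ∀ x ∈ Icc xl xr, 0 ≤ F₀ x)
    (hF₀''pos : ∀ x ∈ Icc xl xr, 0 ≤ deriv^[2] F₀ x)
    (hODE : ∀ x ∈ Icc xl xr,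
      deriv^[3] φ x + F₀ x * deriv^[2] φ x + deriv^[2] F₀ x * φ x = 0)
    (h0 : φ xl = 0) (h1 : deriv φ xl = 0) (h2 : deriv^[2] φ xl = 1) :
    ∀ x ∈ Icc xl xr,
      |deriv^[2] φ x| ≤
        Real.exp ((1 / 2) * ∫ y in xl..xr,
          if deriv^[2] F₀ y - 2 * F₀ y > 0 then
            (1 + (y - xl) ^ 4 / 4) * deriv^[2] F₀ y - 2 * F₀ y
          else ((y - xl) ^ 4 / 4) * deriv^[2] F₀ y) := by
  -- ## Differentiability infrastructure
  have e31 : (3 : WithTop ℕ∞) = 2 + 1 := by norm_num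
  have e21 : (2 : WithTop ℕ∞) = 1 + 1 := by norm_num
  rw [e31, contDiff_succ_iff_deriv] at hφ
  obtain ⟨hd0, -, hφ1⟩ := hφ
  rw [e21, contDiff_succ_iff_deriv] at hφ1
  obtain ⟨hd1, -, hφ2⟩ := hφ1
  have hiter2 : deriv^[2] φ = deriv (deriv φ) := by
    simp [Function.iterate_succ_apply']
  have hiter3 : deriv^[3] φ = deriv (deriv^[2] φ) :=
    Function.iterate_succ_apply' deriv 2 φ
  have hd2 : Differentiable ℝ (deriv^[2] φ) := by
    rw [hiter2]; exact (contDiff_one_iff_deriv.mp hφ2).1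
  have hc3 : Continuous (deriv^[3] φ) := by
    rw [hiter3, hiter2]
    exact (contDiff_one_iff_deriv.mp hφ2).2
  have hc2 : Continuous (deriv^[2] φ) := hd2.continuous
  have hc1 : Continuous (deriv φ) := hd1.continuous
  have hc2' : Continuous (deriv (deriv φ)) := hiter2 ▸ hc2
  rw [e21, contDiff_succ_iff_deriv] at hF₀
  obtain ⟨hFd1, -, hF₁⟩ := hF₀
  have hcF2 : Continuous (deriv^[2] F₀) := by
    have h : deriv^[2] F₀ = deriv (deriv F₀) := by simp [Function.iterate_succ_apply']
    rw [h]; exact (contDiff_one_iff_deriv.mp hF₁).2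
  have hcF0 : Continuous F₀ := hFd1.continuous
  -- ## The comparison weight Q
  set Q : ℝ → ℝ :=
    fun y => (y - xl) ^ 4 / 4 * deriv^[2] F₀ y + max (deriv^[2] F₀ y - 2 * F₀ y) 0 with hQdef
  clear_value Q
  have hQcont : Continuous Q := by
    rw [hQdef]
    apply Continuous.add
    · exact (((continuous_id.sub continuous_const).pow 4).div_const 4).mul hcF2
    · exact (hcF2.sub (continuous_const.mul hcF0)).max continuous_const
  have hQint : ∀ a b : ℝ, IntervalIntegrable Q MeasureTheory.volume a b := fun a b =>
    hQcont.intervalIntegrable a b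
  have hIfQ : ∀ y : ℝ,
      (if deriv^[2] F₀ y - 2 * F₀ y > 0 then
        (1 + (y - xl) ^ 4 / 4) * deriv^[2] F₀ y - 2 * F₀ y
      else ((y - xl) ^ 4 / 4) * deriv^[2] F₀ y) = Q y := by
    intro y
    simp only [hQdef]
    split_ifs with h
    · rw [sup_eq_left.mpr h.le]; ring
    · rw [sup_eq_right.mpr (not_lt.mp h)]; ring
  have hQnn : ∀ y ∈ Icc xl xr, 0 ≤ Q y := by
    intro y hy
    have ha : 0 ≤ (y - xl) ^ 4 / 4 * deriv^[2] F₀ y :=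
      mul_nonneg (by positivity) (hF₀''pos y hy)
    have hb : (0:ℝ) ≤ max (deriv^[2] F₀ y - 2 * F₀ y) 0 := le_max_right _ _
    simp only [hQdef]; linarith
  -- ## B = exp(∫ Q)
  set B : ℝ → ℝ := fun x => Real.exp (∫ t in xl..x, Q t) with hBdef
  clear_value B
  have hBpos : ∀ x, 0 < B x := fun x => by rw [hBdef]; exact Real.exp_pos _
  have hBderiv : ∀ x, HasDerivAt B (Q x * B x) x := by
    intro x
    have ha : HasDerivAt (fun u => ∫ t in xl..u, Q t) (Q x) x :=
      (hQcont.integral_hasStrictDerivAt xl x).hasDerivAt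
    simpa [hBdef, mul_comm] using ha.exp
  have hBxl : B xl = 1 := by rw [hBdef]; simp
  have hBcont : Continuous B :=
    Differentiable.continuous (fun x => (hBderiv x).differentiableAt)
  -- ## Energy E = (φ'')²
  set E : ℝ → ℝ := fun x => (deriv^[2] φ x) ^ 2 with hEdef
  clear_value E
  have hd2' : ∀ x, HasDerivAt (deriv^[2] φ) (deriv^[3] φ x) x := by
    intro x
    have := (hd2 x).hasDerivAt
    rwa [← hiter3] at this
  have hEderiv : ∀ x, HasDerivAt E (2 * deriv^[2] φ x * deriv^[3] φ x) x := by
    intro x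
    simpa [hEdef] using (hd2' x).fun_pow 2
  have hEcont : Continuous E := by
    rw [hEdef]; exact hc2.pow 2
  have hExl : E xl = 1 := by rw [hEdef]; simp [h2]
  -- ## Taylor-type bound for φ
  have taylor : ∀ s, xl ≤ s → ∀ K : ℝ, 0 ≤ K → (∀ t ∈ Icc xl s, |deriv^[2] φ t| ≤ K) →
      |φ s| ≤ K * (s - xl) ^ 2 / 2 := by
    intro s hs K hK hb
    have hder1 : ∀ x ∈ Icc xl s, |deriv φ x| ≤ K * (x - xl) := by
      intro x hxm
      have hfx : deriv φ x = ∫ t in xl..x, deriv (deriv φ) t := by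
        rw [integral_deriv_eq_sub (fun t _ => hd1 t)
          (hc2'.intervalIntegrable xl x), h1, sub_zero]
      rw [hfx]
      have hbound : ∀ t ∈ Set.uIoc xl x, ‖deriv (deriv φ) t‖ ≤ K := by
        intro t ht
        rw [uIoc_of_le hxm.1] at ht
        have : t ∈ Icc xl s := ⟨ht.1.le, ht.2.trans hxm.2⟩
        rw [Real.norm_eq_abs, ← hiter2]
        exact hb t this
      have := norm_integral_le_of_norm_le_const hbound
      rwa [Real.norm_eq_abs, abs_of_nonneg (by linarith [hxm.1] : (0:ℝ) ≤ x - xl)] at this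
    have hφs : φ s = ∫ t in xl..s, deriv φ t := by
      rw [integral_deriv_eq_sub (fun t _ => hd0 t) (hc1.intervalIntegrable xl s), h0, sub_zero]
    rw [hφs]
    calc |∫ t in xl..s, deriv φ t| ≤ ∫ t in xl..s, |deriv φ t| := by
          simpa [Real.norm_eq_abs] using
            norm_integral_le_integral_norm (f := deriv φ) (a := xl) (b := s)
            (μ := MeasureTheory.volume) hs
      _ ≤ ∫ t in xl..s, K * (t - xl) := by
          apply integral_mono_on hs
          · exact (hc1.abs).intervalIntegrable xl s
          · exact (continuous_const.mul
              (continuous_id.sub continuous_const)).intervalIntegrable xl s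
          · exact hder1
      _ = K * (s - xl) ^ 2 / 2 := by
          rw [intervalIntegral.integral_const_mul,
            intervalIntegral.integral_sub intervalIntegrable_id (intervalIntegrable_const),
            integral_id, intervalIntegral.integral_const]
          simp only [smul_eq_mul]
          ring
  -- ## The key Grönwall-type estimate
  have key : ∀ ε : ℝ, 0 < ε → ∀ x ∈ Icc xl xr,
      E x ≤ (1 + ε) * (B x * Real.exp (ε * (x - xl))) := by
    intro ε hε
    set g : ℝ → ℝ := fun x => (1 + ε) * (B x * Real.exp (ε * (x - xl))) with hgdef
    clear_value g
    have hgpos : ∀ x, 0 < g x := fun x => by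
      have h1 := hBpos x; have h2 := Real.exp_pos (ε * (x - xl))
      simp only [hgdef]; positivity
    have hgderiv : ∀ x, HasDerivAt g ((Q x + ε) * g x) x := by
      intro x
      have hexp : HasDerivAt (fun x => Real.exp (ε * (x - xl))) (ε * Real.exp (ε * (x - xl))) x := by
        have hlin : HasDerivAt (fun x : ℝ => ε * (x - xl)) ε x := by
          simpa using ((hasDerivAt_id x).sub_const xl).const_mul ε
        simpa [mul_comm] using hlin.exp
      have h3 : HasDerivAt (fun y => (1 + ε) * (B y * Real.exp (ε * (y - xl))))
          ((1 + ε) * (Q x * B x * Real.exp (ε * (x - xl)) + B x * (ε * Real.exp (ε * (x - xl))))) x :=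
        ((hBderiv x).fun_mul hexp).const_mul (1 + ε)
      convert h3 using 1
      simp only [hgdef]; ring
    have hgcont : Continuous g :=
      Differentiable.continuous (fun x => (hgderiv x).differentiableAt)
    have hgxl : g xl = 1 + ε := by simp only [hgdef]; rw [hBxl]; simp
    have hgmono : MonotoneOn g (Icc xl xr) := by
      apply monotoneOn_of_deriv_nonneg (convex_Icc xl xr) hgcont.continuousOn
        (fun x _ => ((hgderiv x).differentiableAt).differentiableWithinAt)
      intro x hxm
      rw [interior_Icc] at hxm
      rw [(hgderiv x).deriv]
      have hq : 0 ≤ Q x := hQnn x ⟨hxm.1.le, hxm.2.le⟩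
      exact mul_nonneg (by linarith) (hgpos x).le
    by_contra hcon
    push_neg at hcon
    obtain ⟨x₀, hx₀, hgt⟩ := hcon
    have hgt' : g x₀ < E x₀ := by simp only [hgdef]; exact hgt
    set A : Set ℝ := {x | x ∈ Icc xl xr ∧ g x ≤ E x} with hAdef
    have hAne : A.Nonempty := ⟨x₀, hx₀, hgt'.le⟩
    have hAclosed : IsClosed A := by
      have : A = Icc xl xr ∩ {x | g x ≤ E x} := by rw [hAdef]; ext t; simp
      rw [this]
      exact isClosed_Icc.inter (isClosed_le hgcont hEcont)
    have hAbdd : BddBelow A := ⟨xl, fun t ht => ht.1.1⟩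
    set s := sInf A with hsdef
    have hsA : s ∈ A := hAclosed.csInf_mem hAne hAbdd
    have hsIcc : s ∈ Icc xl xr := hsA.1
    have hxls : xl < s := by
      rcases eq_or_lt_of_le hsIcc.1 with h | h
      · exfalso
        have : g s ≤ E s := hsA.2
        rw [← h, hgxl, hExl] at this
        linarith
      · exact h
    have hbefore : ∀ t, xl ≤ t → t < s → E t < g t := by
      intro t htl hts
      by_contra hcon2
      push_neg at hcon2
      have hmem : t ∈ A := ⟨⟨htl, hts.le.trans hsIcc.2⟩, hcon2⟩
      have hle := csInf_le hAbdd hmem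
      rw [← hsdef] at hle
      exact absurd hle (not_le.mpr hts)
    have hEs_le : E s ≤ g s := by
      have htend : Filter.Tendsto E (nhdsWithin s (Iio s)) (nhds (E s)) :=
        (hEcont.continuousAt).continuousWithinAt.tendsto
      have hne : (nhdsWithin s (Iio s)).NeBot := nhdsWithin_Iio_self_neBot' ⟨xl, hxls⟩
      refine le_of_tendsto htend ?_
      filter_upwards [Ioo_mem_nhdsLT_of_mem ⟨hxls, le_refl s⟩] with t ht
      have h1 : E t < g t := hbefore t ht.1.le ht.2
      have h2 : g t ≤ g s := hgmono ⟨ht.1.le, ht.2.le.trans hsIcc.2⟩ hsIcc ht.2.le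
      linarith
    have hEs : E s = g s := le_antisymm hEs_le hsA.2
    have hEt_le : ∀ t ∈ Icc xl s, E t ≤ g s := by
      intro t ht
      rcases eq_or_lt_of_le ht.2 with h | h
      · rw [h]; exact hEs.le
      · have h1 := hbefore t ht.1 h
        have h2 : g t ≤ g s := hgmono ⟨ht.1, ht.2.trans hsIcc.2⟩ hsIcc ht.2
        linarith
    -- Taylor bound with K = sqrt (g s)
    set K := Real.sqrt (g s) with hKdef
    have hK : 0 ≤ K := Real.sqrt_nonneg _
    have hK2 : K ^ 2 = g s := Real.sq_sqrt (hgpos s).le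
    have habs : ∀ t ∈ Icc xl s, |deriv^[2] φ t| ≤ K := by
      intro t ht
      rw [← Real.sqrt_sq_eq_abs, hKdef]
      apply Real.sqrt_le_sqrt
      have h := hEt_le t ht
      rwa [hEdef] at h
    have hφs := taylor s hsIcc.1 K hK habs
    have hφs2 : (φ s) ^ 2 ≤ (s - xl) ^ 4 / 4 * g s := by
      have h1 : |φ s| ^ 2 ≤ (K * (s - xl) ^ 2 / 2) ^ 2 :=
        pow_le_pow_left₀ (abs_nonneg _) hφs 2
      rw [sq_abs] at h1
      calc (φ s) ^ 2 ≤ (K * (s - xl) ^ 2 / 2) ^ 2 := h1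
        _ = (s - xl) ^ 4 / 4 * K ^ 2 := by ring
        _ = (s - xl) ^ 4 / 4 * g s := by rw [hK2]
    -- derivative comparison at s
    have hODEs := hODE s hsIcc
    have hE's : 2 * deriv^[2] φ s * deriv^[3] φ s ≤ Q s * g s := by
      have hF2s : 0 ≤ deriv^[2] F₀ s := hF₀''pos s hsIcc
      have hQges : (s - xl) ^ 4 / 4 * deriv^[2] F₀ s + (deriv^[2] F₀ s - 2 * F₀ s) ≤ Q s := by
        rw [hQdef]
        have := le_max_left (deriv^[2] F₀ s - 2 * F₀ s) (0:ℝ)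
        linarith
      have hQs0 : 0 ≤ Q s := hQnn s hsIcc
      have hEsq : (deriv^[2] φ s) ^ 2 = g s := by rw [← hEs, hEdef]
      have hd3 : deriv^[3] φ s = -(F₀ s * deriv^[2] φ s) - deriv^[2] F₀ s * φ s := by
        linarith
      rw [hd3]
      have hamgm : -(2 * (φ s * deriv^[2] φ s)) ≤ (φ s) ^ 2 + (deriv^[2] φ s) ^ 2 := by
        linarith only [sq_nonneg (φ s + deriv^[2] φ s)]
      have hA1 : deriv^[2] F₀ s * (-(2 * (φ s * deriv^[2] φ s))) ≤
          deriv^[2] F₀ s * ((φ s) ^ 2 + (deriv^[2] φ s) ^ 2) :=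
        mul_le_mul_of_nonneg_left hamgm hF2s
      have hA2 : deriv^[2] F₀ s * (φ s) ^ 2 ≤ deriv^[2] F₀ s * ((s - xl) ^ 4 / 4 * g s) :=
        mul_le_mul_of_nonneg_left hφs2 hF2s
      have hA3 : ((s - xl) ^ 4 / 4 * deriv^[2] F₀ s + (deriv^[2] F₀ s - 2 * F₀ s)) * g s ≤
          Q s * g s := mul_le_mul_of_nonneg_right hQges (hgpos s).le
      have hA4 : deriv^[2] F₀ s * (deriv^[2] φ s) ^ 2 = deriv^[2] F₀ s * g s := by
        rw [hEsq]
      have hA5 : F₀ s * (deriv^[2] φ s) ^ 2 = F₀ s * g s := by rw [hEsq]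
      linarith only [hA1, hA2, hA3, hA4, hA5]
    -- contradiction via slope
    have hD : HasDerivAt (fun x => E x - g x)
        (2 * deriv^[2] φ s * deriv^[3] φ s - (Q s + ε) * g s) s :=
      (hEderiv s).sub (hgderiv s)
    have hδneg : 2 * deriv^[2] φ s * deriv^[3] φ s - (Q s + ε) * g s < 0 := by
      have h6 : 0 < ε * g s := mul_pos hε (hgpos s)
      linarith only [hE's, h6]
    rw [hasDerivAt_iff_tendsto_slope] at hD
    have hmono : nhdsWithin s (Iio s) ≤ nhdsWithin s {s}ᶜ :=
      nhdsWithin_mono s (fun t ht => ne_of_lt ht)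
    have hev : ∀ᶠ t in nhdsWithin s (Iio s), slope (fun x => E x - g x) s t < 0 :=
      (hD.mono_left hmono).eventually_lt_const hδneg
    have hne : (nhdsWithin s (Iio s)).NeBot := nhdsWithin_Iio_self_neBot' ⟨xl, hxls⟩
    have hev2 : ∀ᶠ t in nhdsWithin s (Iio s), t ∈ Ioo xl s :=
      Ioo_mem_nhdsLT_of_mem ⟨hxls, le_refl s⟩
    obtain ⟨t, ht1, ht2⟩ := (hev.and hev2).exists
    have hts : t - s < 0 := by linarith [ht2.2]
    have hslope : (E t - g t - (E s - g s)) / (t - s) < 0 := by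
      simpa [slope_def_field] using ht1
    rw [hEs, sub_self, sub_zero] at hslope
    have hpos : 0 < E t - g t := by
      rcases div_neg_iff.mp hslope with ⟨h1, h2⟩ | ⟨h1, h2⟩
      · linarith
      · linarith
    have := hbefore t ht2.1.le ht2.2
    linarith
  -- ## Pass to the limit ε → 0⁺
  have hEB : ∀ x ∈ Icc xl xr, E x ≤ B x := by
    intro x hxm
    have htend : Filter.Tendsto (fun ε : ℝ => (1 + ε) * (B x * Real.exp (ε * (x - xl))))
        (nhdsWithin 0 (Ioi 0)) (nhds (B x)) := by
      have hcont : Continuous (fun ε : ℝ => (1 + ε) * (B x * Real.exp (ε * (x - xl)))) :=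
        (continuous_const.add continuous_id).mul (continuous_const.mul
          (Real.continuous_exp.comp (continuous_id.mul continuous_const)))
      have h := (hcont.tendsto 0).mono_left (nhdsWithin_le_nhds (s := Ioi (0:ℝ)))
      simpa using h
    refine ge_of_tendsto htend ?_
    filter_upwards [self_mem_nhdsWithin] with ε hε
    exact key ε hε x hxm
  -- ## Conclusion
  intro x hxm
  rw [show (∫ y in xl..xr,
      if deriv^[2] F₀ y - 2 * F₀ y > 0 then
        (1 + (y - xl) ^ 4 / 4) * deriv^[2] F₀ y - 2 * F₀ y
      else ((y - xl) ^ 4 / 4) * deriv^[2] F₀ y) = ∫ y in xl..xr, Q y from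
    intervalIntegral.integral_congr (fun y _ => hIfQ y)]
  have hBle : B x ≤ Real.exp (∫ y in xl..xr, Q y) := by
    rw [hBdef]
    apply Real.exp_le_exp.mpr
    have hsplit : (∫ t in xl..x, Q t) + ∫ t in x..xr, Q t = ∫ t in xl..xr, Q t :=
      integral_add_adjacent_intervals (hQint xl x) (hQint x xr)
    have hnn : 0 ≤ ∫ t in x..xr, Q t :=
      intervalIntegral.integral_nonneg hxm.2 (fun u hu => hQnn u ⟨hxm.1.trans hu.1, hu.2⟩)
    linarith
  have hEx : (deriv^[2] φ x) ^ 2 ≤ Real.exp (∫ y in xl..xr, Q y) := by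
    have h := le_trans (hEB x hxm) hBle
    rwa [hEdef] at h
  have hexp2 : Real.exp (∫ y in xl..xr, Q y) =
      (Real.exp ((1/2) * ∫ y in xl..xr, Q y)) ^ 2 := by
    rw [sq, ← Real.exp_add]; ring_nf
  calc |deriv^[2] φ x| = Real.sqrt ((deriv^[2] φ x) ^ 2) := (Real.sqrt_sq_eq_abs _).symm
    _ ≤ Real.sqrt ((Real.exp ((1/2) * ∫ y in xl..xr, Q y)) ^ 2) := by
        apply Real.sqrt_le_sqrt; rw [← hexp2]; exact hEx
    _ = Real.exp ((1/2) * ∫ y in xl..xr, Q y) := Real.sqrt_sq (Real.exp_nonneg _)
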